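/- For every rooted tree T of order n > 1 whose root r has degree (number of children) k, the rank of the root satisfies R_T(r) ≤ ⌊(n−1)/k⌋. Moreover, equality holds if T is a starlike tree S(ℓ_1, ℓ_2, …, ℓ_k) with k ≥ 3, rooted at its unique branching vertex, with min_{1 ≤ i ≤ k} ℓ_i = ⌊(n−1)/k⌋. -/

import Mathlib

/-- Rooted trees: a root together with a (possibly empty) list of subtrees. -/
inductive RTree : Type
  | node : List RTree → RTree

namespace RTree

mutual
  /-- The rank (protection number) of the root of a rooted tree: the minimum
  distance from the root to a leaf descendant.  Leaves have rank `0`. -/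
  def rank : RTree → ℕ
    | .node [] => 0
    | .node (t :: ts) => minRankAux t ts + 1
  termination_by t => sizeOf t
  decreasing_by
    all_goals simp_wf
    all_goals omega
  /-- Minimum of the ranks of `t :: ts`. -/
  def minRankAux : RTree → List RTree → ℕ
    | t, [] => rank t
    | t, s :: ts => min (rank t) (minRankAux s ts)
  termination_by t ts => sizeOf t + sizeOf ts
  decreasing_by
    all_goals simp_wf
    all_goals omega
end

mutual
  /-- The order of a rooted tree: its number of vertices. -/
  def order : RTree → ℕ
    | .node ts => orderList ts + 1
  def orderList : List RTree → ℕ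
    | [] => 0
    | t :: ts => order t + orderList ts
end

mutual
  /-- The security of a rooted tree: the sum of the ranks of all of its vertices. -/
  def security : RTree → ℕ
    | .node ts => rank (.node ts) + securityList ts
  def securityList : List RTree → ℕ
    | [] => 0
    | t :: ts => security t + securityList ts
end

mutual
  /-- The height of a rooted tree: the maximum distance from the root to a leaf. -/
  def height : RTree → ℕ
    | .node [] => 0
    | .node (t :: ts) => maxHeightAux t ts + 1
  termination_by t => sizeOf t
  decreasing_by
    all_goals simp_wf
    all_goals omega
  def maxHeightAux : RTree → List RTree → ℕ
    | t, [] => height t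
    | t, s :: ts => max (height t) (maxHeightAux s ts)
  termination_by t ts => sizeOf t + sizeOf ts
  decreasing_by
    all_goals simp_wf
    all_goals omega
end

mutual
  /-- The outdegree sequence of a rooted tree: the multiset of the numbers of
  children of all of its vertices. -/
  def degSeq : RTree → Multiset ℕ
    | .node ts => ts.length ::ₘ degSeqList ts
  def degSeqList : List RTree → Multiset ℕ
    | [] => 0
    | t :: ts => degSeq t + degSeqList ts
end

/-- The subtree of `T` rooted at the vertex with position `p` (a list of child
indices, read from the root), if such a vertex exists.  The vertices of `T` are
exactly the valid positions; the rank of a vertex in `T` equals the rank (of the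
root) of the subtree of `T` rooted at that vertex. -/
def subtreeAt : List ℕ → RTree → Option RTree
  | [], t => some t
  | i :: is, .node ts => ts[i]?.bind (subtreeAt is)

/-- A rooted path whose root is an end vertex: every vertex has at most one child. -/
def IsPath : RTree → Prop
  | .node [] => True
  | .node [t] => IsPath t
  | .node (_ :: _ :: _) => False

/-- A `k`-ary tree: every vertex has at most `k` children. -/
def IsKary (k : ℕ) (T : RTree) : Prop :=
  ∀ p ts, subtreeAt p T = some (.node ts) → ts.length ≤ k

/-- The rooted path with `n` edges (`n + 1` vertices). -/
def pathTree : ℕ → RTree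
  | 0 => .node []
  | n + 1 => .node [pathTree n]

/-- The starlike tree `S(ℓ₁, …, ℓ_k)`: paths of lengths `ℓ₁, …, ℓ_k` with one end vertex
of each identified to a single vertex, the root. -/
def starlike (ls : List ℕ) : RTree := .node (ls.map (fun l => pathTree (l - 1)))

/-- A rooted complete `k`-ary tree: every non-leaf vertex has exactly `k` children, all
leaves lie on at most two consecutive levels, and at most one vertex has both leaf and
non-leaf children. -/
def IsCompleteKary (k : ℕ) (T : RTree) : Prop :=
  (∀ p ts, subtreeAt p T = some (.node ts) → ts = [] ∨ ts.length = k) ∧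
  T.height ≤ T.rank + 1 ∧
  (∀ p q ts us, subtreeAt p T = some (.node ts) → subtreeAt q T = some (.node us) →
    (∃ c ∈ ts, c = RTree.node []) → (∃ c ∈ ts, c ≠ RTree.node []) →
    (∃ c ∈ us, c = RTree.node []) → (∃ c ∈ us, c ≠ RTree.node []) → p = q)

theorem rank_lt_order : ∀ t : RTree, rank t < order t
  | .node [] => by simp [rank, order, orderList]
  | .node (a :: l) => by
      have h := rank_lt_order a
      have h2 : minRankAux a l ≤ rank a := by
        cases l <;> simp [minRankAux]
      simp only [rank, order, orderList]
      omega
  termination_by t => sizeOf t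
  decreasing_by simp_wf; omega

theorem mul_minRank_le : ∀ (l : List RTree) (a : RTree),
    (l.length + 1) * (minRankAux a l + 1) ≤ order a + orderList l
  | [], a => by
      have := rank_lt_order a
      simp only [minRankAux, orderList, List.length_nil]
      omega
  | b :: l, a => by
      have ih := mul_minRank_le l b
      have hm : minRankAux a (b :: l) = min (rank a) (minRankAux b l) := by
        simp [minRankAux]
      have h1 : rank a < order a := rank_lt_order a
      set m := min (rank a) (minRankAux b l) with hmdef
      have hma : m ≤ rank a := min_le_left _ _
      have hmb : m ≤ minRankAux b l := min_le_right _ _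
      have h2 : (l.length + 1) * (m + 1) ≤ order b + orderList l :=
        le_trans (Nat.mul_le_mul_left _ (by omega)) ih
      have hcalc : ((b :: l).length + 1) * (minRankAux a (b :: l) + 1)
          = (m + 1) + (l.length + 1) * (m + 1) := by
        rw [hm, List.length_cons]; ring
      have horder : orderList (b :: l) = order b + orderList l := by simp [orderList]
      rw [hcalc, horder]
      exact Nat.add_le_add (by omega) h2

theorem rank_pathTree : ∀ m : ℕ, rank (pathTree m) = m
  | 0 => by simp [pathTree, rank]
  | m + 1 => by
      show rank (.node [pathTree m]) = m + 1
      rw [rank, minRankAux, rank_pathTree m]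

theorem le_minRankAux : ∀ (l : List RTree) (a : RTree) (m : ℕ),
    m ≤ rank a → (∀ b ∈ l, m ≤ rank b) → m ≤ minRankAux a l
  | [], a, m, h, _ => by simpa [minRankAux]
  | b :: l, a, m, h, h2 => by
      rw [minRankAux, le_min_iff]
      exact ⟨h, le_minRankAux l b m (h2 b (by simp))
        (fun c hc => h2 c (by simp [hc]))⟩

end RTree

open RTree in
/-- For a rooted tree `T` of order `n > 1` whose root has `k` children,
`R_T(r) ≤ ⌊(n−1)/k⌋`; moreover equality holds if `T` is a starlike tree
`S(ℓ₁, …, ℓ_k)` with `k ≥ 3`, rooted at its unique branching vertex, with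
`min ℓᵢ = ⌊(n−1)/k⌋`. -/
theorem root_rank_le_of_root_degree (n k : ℕ) (T : RTree) (ts : List RTree)
    (hT : T = .node ts) (hn : T.order = n) (hn1 : 1 < n) (hk : ts.length = k) :
    T.rank ≤ (n - 1) / k ∧
      (∀ ls : List ℕ, T = starlike ls → ls.length = k → 3 ≤ k →
        (∀ l ∈ ls, 1 ≤ l) →
        (∀ l ∈ ls, (n - 1) / k ≤ l) → (∃ l ∈ ls, l = (n - 1) / k) →
        T.rank = (n - 1) / k) := by
  subst hT
  cases ts with
  | nil =>
      exfalso
      rw [order, orderList] at hn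
      omega
  | cons a l =>
      have horder : order (RTree.node (a :: l)) = order a + orderList l + 1 := by
        rw [order, orderList]
      have hrank : rank (RTree.node (a :: l)) = minRankAux a l + 1 := by
        rw [rank]
      have hk' : l.length + 1 = k := by simpa using hk
      have hkey := mul_minRank_le l a
      have hub : rank (RTree.node (a :: l)) ≤ (n - 1) / k := by
        rw [Nat.le_div_iff_mul_le (by omega), hrank]
        calc (minRankAux a l + 1) * k = k * (minRankAux a l + 1) := Nat.mul_comm _ _
          _ = (l.length + 1) * (minRankAux a l + 1) := by rw [hk']
          _ ≤ order a + orderList l := hkey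
          _ ≤ n - 1 := by omega
      refine ⟨hub, ?_⟩
      intro ls heq hlen hk3 hone hlow ⟨l₀, hl₀, hl₀eq⟩
      have hts : a :: l = ls.map (fun l => pathTree (l - 1)) := by
        rw [starlike] at heq
        injection heq
      set q := (n - 1) / k with hq
      have hlb : ∀ b ∈ a :: l, q - 1 ≤ rank b := by
        intro b hb
        rw [hts] at hb
        obtain ⟨x, hx, rfl⟩ := List.mem_map.mp hb
        rw [rank_pathTree]
        have := hlow x hx
        omega
      have hmin : q - 1 ≤ minRankAux a l :=
        le_minRankAux l a (q - 1) (hlb a (by simp)) (fun b hb => hlb b (by simp [hb]))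
      rw [hrank] at hub ⊢
      omega
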